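/- If a finite positive Borel measure μ on 𝕋 satisfies (φ_N)^*μ = μ for some N ≥ 2, where (φ_N)^*μ = (1/N)·Σ_{k=0}^{N−1} (i_k)_*((φ_N|_{I_k})^{−1})_*μ is the pullback along φ_N, then μ = μ(𝕋)·λ is a scalar multiple of Haar measure. -/

import Mathlib

open MeasureTheory

/-- The inverse of `φ_N` restricted to the arc `I_k` (with arcs parametrized by `(0,1]`
in the model `𝕋 = ℝ/ℤ`), viewed as a map `𝕋 → 𝕋`: a representative `t ∈ (0,1]` of `x`
is sent to `(t + k)/N ∈ I_k`. -/
noncomputable def circleSection (N k : ℕ) (x : UnitAddCircle) : UnitAddCircle :=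
  ((((AddCircle.equivIoc (1 : ℝ) 0) x).1 + k) / N : ℝ)

/-- The pullback `(φ_N)^*μ = (1/N)·Σ_{k=0}^{N−1} (i_k)_*((φ_N|_{I_k})^{−1})_*μ`. -/
noncomputable def circlePullback (N : ℕ) (μ : Measure UnitAddCircle) :
    Measure UnitAddCircle :=
  (N : ENNReal)⁻¹ • ∑ k ∈ Finset.range N, Measure.map (circleSection N k) μ

section Aux
open Complex Real Set

lemma measurable_circleSection (N k : ℕ) : Measurable (circleSection N k) := by
  unfold circleSection
  exact AddCircle.measurable_mk'.comp
    ((((AddCircle.measurableEquivIoc 1 0).measurable.subtype_val).add_const _).div_const _)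

lemma fourier_circleSection (N k : ℕ) (n : ℤ) (x : UnitAddCircle) :
    fourier n (circleSection N k x) =
      Complex.exp (2 * π * I * n * (((AddCircle.equivIoc (1 : ℝ) 0) x).1 + k) / N) := by
  rw [circleSection, fourier_coe_apply]
  push_cast
  ring_nf

lemma zeta_pow (N : ℕ) (n : ℤ) (k : ℕ) :
    Complex.exp (2 * π * I * n * k / N) = Complex.exp (2 * π * I * n / N) ^ k := by
  rw [← Complex.exp_nat_mul]; ring_nf

lemma zeta_eq_one_iff (N : ℕ) (hN : 2 ≤ N) (n : ℤ) :
    Complex.exp (2 * π * I * n / N) = 1 ↔ (N : ℤ) ∣ n := by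
  have hNne : (N : ℂ) ≠ 0 := Nat.cast_ne_zero.mpr (by omega)
  have hπ : (π : ℂ) ≠ 0 := Complex.ofReal_ne_zero.mpr Real.pi_ne_zero
  have h2 : (2 : ℂ) * π * I ≠ 0 := by simp [hπ, Complex.I_ne_zero]
  rw [Complex.exp_eq_one_iff]
  constructor
  · rintro ⟨m, hm⟩
    refine ⟨m, ?_⟩
    have hc : (n : ℂ) = (N : ℂ) * m := by
      field_simp at hm
      refine mul_left_cancel₀ h2 ?_
      linear_combination (2 * π * I) * hm
    exact_mod_cast hc
  · rintro ⟨m, rfl⟩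
    exact ⟨m, by push_cast; field_simp⟩

lemma sum_zeta (N : ℕ) (hN : 2 ≤ N) (n : ℤ) (hn : ¬ (N : ℤ) ∣ n) :
    ∑ k ∈ Finset.range N, Complex.exp (2 * π * I * n / N) ^ k = 0 := by
  have hζ : Complex.exp (2 * π * I * n / N) ≠ 1 := by
    simpa [zeta_eq_one_iff N hN] using hn
  rw [geom_sum_eq hζ]
  have : Complex.exp (2 * π * I * n / N) ^ N = 1 := by
    rw [← Complex.exp_nat_mul]
    have hNne : (N : ℂ) ≠ 0 := Nat.cast_ne_zero.mpr (by omega)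
    rw [show (N : ℂ) * (2 * π * I * n / N) = n * (2 * π * I) by field_simp]
    exact Complex.exp_int_mul_two_pi_mul_I n
  rw [this, sub_self, zero_div]


lemma norm_fourier_le (n : ℤ) (x : UnitAddCircle) : ‖fourier n x‖ ≤ 1 :=
  le_of_eq (Circle.norm_coe _)

lemma integrable_fourier_comp (N k : ℕ) (n : ℤ) (μ : Measure UnitAddCircle)
    [IsFiniteMeasure μ] : Integrable (fun x => fourier n (circleSection N k x)) μ :=
  ⟨((map_continuous (fourier n)).measurable.comp (measurable_circleSection N k)).aestronglyMeasurable,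
    HasFiniteIntegral.of_bounded (C := 1) (Filter.Eventually.of_forall fun x => norm_fourier_le n _)⟩

lemma integrable_fourier (n : ℤ) (μ : Measure UnitAddCircle) [IsFiniteMeasure μ] :
    Integrable (fun x => fourier n x) μ :=
  ⟨(map_continuous (fourier n)).measurable.aestronglyMeasurable,
    HasFiniteIntegral.of_bounded (C := 1) (Filter.Eventually.of_forall fun x => norm_fourier_le n _)⟩

lemma integral_fourier_pullback (N : ℕ) (hN : 2 ≤ N) (μ : Measure UnitAddCircle)
    [IsFiniteMeasure μ] (n : ℤ) :
    ∫ x, fourier n x ∂(circlePullback N μ) =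
      if (N : ℤ) ∣ n then ∫ x, fourier (n / N) x ∂μ else 0 := by
  have hNR : (N : ℝ) ≠ 0 := Nat.cast_ne_zero.mpr (by omega)
  have hmap : ∀ k, ∫ x, fourier n x ∂(Measure.map (circleSection N k) μ)
      = ∫ x, fourier n (circleSection N k x) ∂μ := fun k =>
    integral_map (measurable_circleSection N k).aemeasurable
      (map_continuous (fourier n)).aestronglyMeasurable
  have hfin : ∀ k : ℕ, IsFiniteMeasure (Measure.map (circleSection N k) μ) := fun k =>
    ⟨by rw [Measure.map_apply (measurable_circleSection N k) MeasurableSet.univ]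
        exact measure_lt_top μ _⟩
  rw [circlePullback, integral_smul_measure, integral_finset_sum_measure (fun k _ =>
    haveI := hfin k; integrable_fourier n _)]
  simp_rw [hmap]
  rw [← integral_finset_sum _ (fun k _ => integrable_fourier_comp N k n μ)]
  have key : ∀ x : UnitAddCircle,
      ∑ k ∈ Finset.range N, fourier n (circleSection N k x) =
        if (N : ℤ) ∣ n then (N : ℂ) * fourier (n / N) x else 0 := by
    intro x
    have hNC : (N : ℂ) ≠ 0 := Nat.cast_ne_zero.mpr (by omega)
    set t : ℝ := ((AddCircle.equivIoc (1 : ℝ) 0) x).1 with ht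
    have hxt : ((t : ℝ) : UnitAddCircle) = x := (AddCircle.equivIoc (1:ℝ) 0).symm_apply_apply x
    have hterm : ∀ k : ℕ, fourier n (circleSection N k x) =
        Complex.exp (2 * π * I * n * t / N) * Complex.exp (2 * π * I * n / N) ^ k := by
      intro k
      rw [fourier_circleSection, ← zeta_pow, ← Complex.exp_add]
      congr 1
      field_simp
      ring
    simp_rw [hterm, ← Finset.mul_sum]
    by_cases hd : (N : ℤ) ∣ n
    · obtain ⟨m, rfl⟩ := hd
      rw [if_pos (dvd_mul_right _ _),
        Int.mul_ediv_cancel_left _ (Int.natCast_ne_zero.mpr (by omega))]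
      have h1 : ∀ k ∈ Finset.range N, Complex.exp (2 * π * I * (N * m : ℤ) / N) ^ k = 1 := by
        intro k _
        rw [← Complex.exp_nat_mul]
        push_cast
        rw [show (k : ℂ) * (2 * π * I * ((N:ℂ) * m) / N) = (m * k : ℤ) * (2 * π * I) by
          push_cast; field_simp]
        exact Complex.exp_int_mul_two_pi_mul_I _
      rw [Finset.sum_congr rfl h1, Finset.sum_const, Finset.card_range, nsmul_eq_mul, mul_one]
      rw [show Complex.exp (2 * π * I * (N * m : ℤ) * t / N) = Complex.exp (2 * π * I * m * t) by
        congr 1; push_cast; field_simp [hNC]]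
      rw [← hxt, fourier_coe_apply]
      push_cast
      ring_nf
    · rw [if_neg hd, sum_zeta N hN n hd, mul_zero]
  by_cases hd : (N : ℤ) ∣ n
  · simp only [key, if_pos hd]
    rw [integral_const_mul]
    have h1 : ((N : ENNReal)⁻¹).toReal = (N : ℝ)⁻¹ := by simp
    have hNC : (N : ℂ) ≠ 0 := Nat.cast_ne_zero.mpr (by omega)
    rw [h1, Complex.real_smul, ← mul_assoc]
    push_cast
    rw [inv_mul_cancel₀ hNC, one_mul]
  · simp only [key, if_neg hd, integral_zero, smul_zero]

lemma fourier_vanish (N : ℕ) (hN : 2 ≤ N) (μ : Measure UnitAddCircle) [IsFiniteMeasure μ]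
    (h : circlePullback N μ = μ) : ∀ n : ℤ, n ≠ 0 → ∫ x, fourier n x ∂μ = 0 := by
  have key : ∀ K : ℕ, ∀ n : ℤ, n.natAbs = K → n ≠ 0 → ∫ x, fourier n x ∂μ = 0 := by
    intro K
    induction K using Nat.strong_induction_on with
    | _ K IH =>
      intro n hK hn
      have h0 := integral_fourier_pullback N hN μ n
      rw [h] at h0
      by_cases hd : (N : ℤ) ∣ n
      · rw [h0, if_pos hd]
        obtain ⟨m, rfl⟩ := hd
        have hNz : (N : ℤ) ≠ 0 := Int.natCast_ne_zero.mpr (by omega)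
        rw [Int.mul_ediv_cancel_left _ hNz]
        have hm : m ≠ 0 := by rintro rfl; simp at hn
        refine IH m.natAbs ?_ m rfl hm
        subst hK
        have : (↑N * m).natAbs = N * m.natAbs := by
          simp [Int.natAbs_mul]
        rw [this]
        have h1 : 1 ≤ m.natAbs := Int.natAbs_pos.mpr hm
        nlinarith
      · rw [h0, if_neg hd]
  exact fun n hn => key n.natAbs n rfl hn

lemma integral_fourier_volume (n : ℤ) (hn : n ≠ 0) :
    ∫ x : UnitAddCircle, fourier n x ∂volume = 0 := by
  rw [← UnitAddCircle.intervalIntegral_preimage 0 (fun x => fourier n x), zero_add]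
  have hc : (2 * π * I * n : ℂ) ≠ 0 := by
    simp [Real.pi_ne_zero, Complex.I_ne_zero, hn]
  have : ∀ x : ℝ, fourier n (↑x : UnitAddCircle) = Complex.exp ((2 * π * I * n) * x) := by
    intro x
    rw [fourier_coe_apply]
    push_cast
    ring_nf
  rw [intervalIntegral.integral_congr (g := fun x : ℝ => Complex.exp ((2 * π * I * n) * x))
    (fun x _ => this x), integral_exp_mul_complex hc]
  have h1 : Complex.exp ((2 * π * I * n : ℂ) * ((1:ℝ):ℂ)) = 1 := by
    rw [show (2 * π * I * n : ℂ) * ((1:ℝ):ℂ) = (n : ℤ) * (2 * π * I) by push_cast; ring]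
    exact Complex.exp_int_mul_two_pi_mul_I n
  rw [h1]
  norm_num

lemma measure_eq_of_fourier (μ ν : Measure UnitAddCircle) [IsFiniteMeasure μ] [IsFiniteMeasure ν]
    (h : ∀ n : ℤ, ∫ x, fourier n x ∂μ = ∫ x, fourier n x ∂ν) : μ = ν := by
  haveI : Fact ((0:ℝ) < 1) := ⟨one_pos⟩
  have hint : ∀ (κ : Measure UnitAddCircle) [IsFiniteMeasure κ] (f : C(UnitAddCircle, ℂ)),
      Integrable f κ := fun κ _ f =>
    BoundedContinuousFunction.integrable κ (BoundedContinuousFunction.mkOfCompact f)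
  let L : C(UnitAddCircle, ℂ) →ₗ[ℂ] ℂ :=
    { toFun := fun f => (∫ x, f x ∂μ) - ∫ x, f x ∂ν
      map_add' := fun f g => by
        simp only [ContinuousMap.add_apply]
        rw [integral_add (hint μ f) (hint μ g), integral_add (hint ν f) (hint ν g)]; ring
      map_smul' := fun c f => by
        simp only [ContinuousMap.smul_apply, RingHom.id_apply, smul_eq_mul]
        rw [integral_const_mul, integral_const_mul]; ring }
  have hbound : ∀ f : C(UnitAddCircle, ℂ),
      ‖L f‖ ≤ ((μ Set.univ).toReal + (ν Set.univ).toReal) * ‖f‖ := by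
    intro f
    have h1 := BoundedContinuousFunction.norm_integral_le_mul_norm μ
      (BoundedContinuousFunction.mkOfCompact f)
    have h2 := BoundedContinuousFunction.norm_integral_le_mul_norm ν
      (BoundedContinuousFunction.mkOfCompact f)
    rw [BoundedContinuousFunction.norm_mkOfCompact] at h1 h2
    calc ‖(∫ x, f x ∂μ) - ∫ x, f x ∂ν‖
        ≤ ‖∫ x, f x ∂μ‖ + ‖∫ x, f x ∂ν‖ := norm_sub_le _ _
      _ ≤ (μ Set.univ).toReal * ‖f‖ + (ν Set.univ).toReal * ‖f‖ := add_le_add h1 h2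
      _ = ((μ Set.univ).toReal + (ν Set.univ).toReal) * ‖f‖ := by ring
  let L' : C(UnitAddCircle, ℂ) →L[ℂ] ℂ := L.mkContinuous _ hbound
  have hker : Submodule.span ℂ (Set.range (@fourier 1)) ≤ L'.ker := by
    rw [Submodule.span_le]
    rintro _ ⟨n, rfl⟩
    simp only [SetLike.mem_coe, LinearMap.mem_ker]
    show (∫ x, fourier n x ∂μ) - ∫ x, fourier n x ∂ν = 0
    rw [h n, sub_self]
  have htop : (Submodule.span ℂ (Set.range (@fourier 1))).topologicalClosure ≤
      L'.ker :=
    Submodule.topologicalClosure_minimal _ hker (ContinuousLinearMap.isClosed_ker L')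
  rw [span_fourier_closure_eq_top] at htop
  have hfun : ∀ f : C(UnitAddCircle, ℂ), ∫ x, f x ∂μ = ∫ x, f x ∂ν := by
    intro f
    have := htop (Submodule.mem_top (x := f))
    rw [LinearMap.mem_ker] at this
    exact sub_eq_zero.mp this
  refine ext_of_forall_lintegral_eq_of_IsFiniteMeasure fun g => ?_
  have hμ := BoundedContinuousFunction.lintegral_lt_top_of_nnreal μ g
  have hν := BoundedContinuousFunction.lintegral_lt_top_of_nnreal ν g
  have hR : ∫ x, ((g x : ℝ)) ∂μ = ∫ x, ((g x : ℝ)) ∂ν := by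
    have hf := hfun ⟨fun x => ((g x : ℝ) : ℂ), by
      exact Complex.continuous_ofReal.comp (NNReal.continuous_coe.comp g.continuous)⟩
    simp only [ContinuousMap.coe_mk] at hf
    have h1 := integral_ofReal (𝕜 := ℂ) (f := fun x => (g x : ℝ)) (μ := μ)
    have h2 := integral_ofReal (𝕜 := ℂ) (f := fun x => (g x : ℝ)) (μ := ν)
    have h3 : ((∫ x, (g x : ℝ) ∂μ : ℝ) : ℂ) = ((∫ x, (g x : ℝ) ∂ν : ℝ) : ℂ) :=
      h1.symm.trans (hf.trans h2)
    exact_mod_cast h3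
  rw [← ENNReal.toReal_eq_toReal_iff' hμ.ne hν.ne,
    BoundedContinuousFunction.toReal_lintegral_coe_eq_integral,
    BoundedContinuousFunction.toReal_lintegral_coe_eq_integral]
  exact hR


end Aux

/-- If a finite positive measure `μ` on the circle satisfies `(φ_N)^*μ = μ` for some
`N ≥ 2`, then `μ = μ(𝕋)·λ` is a scalar multiple of the Haar probability measure. -/
theorem stmt_8 (N : ℕ) (hN : 2 ≤ N) (μ : Measure UnitAddCircle) [IsFiniteMeasure μ]
    (h : circlePullback N μ = μ) :
    μ = (μ Set.univ) • (volume : Measure UnitAddCircle) := by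
  haveI : IsFiniteMeasure ((μ Set.univ) • (volume : Measure UnitAddCircle)) := by
    constructor
    rw [Measure.smul_apply, smul_eq_mul]
    exact ENNReal.mul_lt_top (measure_lt_top μ _)
      (by rw [UnitAddCircle.measure_univ]; exact ENNReal.one_lt_top)
  refine measure_eq_of_fourier μ _ fun n => ?_
  rw [integral_smul_measure]
  by_cases hn : n = 0
  · subst hn
    simp only [fourier_zero]
    rw [integral_const, integral_const]
    simp only [Measure.real, UnitAddCircle.measure_univ]
    simp [Measure.real]
  · rw [fourier_vanish N hN μ h n hn, integral_fourier_volume n hn, smul_zero]
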